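/- Theorem 3.2(iv) (weak convergence in ran Q): Assume 2ν > β. Let (x_k) be a bounded sequence in H satisfying the G-FBS iteration Q x_k − B x_k − Q x_{k+1} ∈ A x_{k+1} for every k ∈ ℕ, suppose there exists x⋆ ∈ H with −B x⋆ ∈ A x⋆, and assume the following demiclosedness property of A + B (which holds when A is maximally monotone and B is cocoercive with full domain): for all sequences (y_k), (u_k) in H with u_k − B y_k ∈ A y_k for every k, if y_k converges weakly to y and u_k converges strongly to u, then u − B y ∈ A y. Then there exists z ∈ H with −B z ∈ A z such that Q x_k converges weakly to Q z, i.e. ⟪Q x_k, v⟫ → ⟪Q z, v⟫ as k → ∞ for every v ∈ H. -/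

import Mathlib

open RealInnerProductSpace

open Filter

lemma seq_weak_compact {H : Type*} [NormedAddCommGroup H] [InnerProductSpace ℝ H]
    [CompleteSpace H] (x : ℕ → H) (C : ℝ) (hC : ∀ k, ‖x k‖ ≤ C) :
    ∃ (y : H) (φ : ℕ → ℕ), StrictMono φ ∧
      ∀ v : H, Tendsto (fun i => ⟪x (φ i), v⟫) atTop (nhds ⟪y, v⟫) := by
  have hC0 : 0 ≤ C := le_trans (norm_nonneg _) (hC 0)
  -- diagonal extraction via compactness of the Hilbert cube
  have hT : IsSeqCompact (Set.univ.pi fun _ : ℕ => Set.Icc (-(C*C)) (C*C)) :=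
    (isCompact_univ_pi fun _ => isCompact_Icc).isSeqCompact
  have hmem : ∀ k, (fun j => ⟪x k, x j⟫) ∈ (Set.univ.pi fun _ : ℕ => Set.Icc (-(C*C)) (C*C)) := by
    intro k j _
    have h1 : |⟪x k, x j⟫| ≤ ‖x k‖ * ‖x j‖ := abs_real_inner_le_norm _ _
    have h2 : ‖x k‖ * ‖x j‖ ≤ C * C :=
      mul_le_mul (hC k) (hC j) (norm_nonneg _) hC0
    exact Set.mem_Icc.2 (abs_le.1 (h1.trans h2))
  obtain ⟨f, -, φ, hφ, hconv⟩ := hT fun k => hmem k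
  rw [tendsto_pi_nhds] at hconv
  -- the set of v for which the inner products converge
  set S : Submodule ℝ H :=
    { carrier := {v | ∃ c, Tendsto (fun i => ⟪x (φ i), v⟫) atTop (nhds c)}
      add_mem' := by
        rintro a b ⟨c, hc⟩ ⟨c', hc'⟩
        exact ⟨c + c', by simpa [inner_add_right] using hc.add hc'⟩
      zero_mem' := ⟨0, by simpa using tendsto_const_nhds⟩
      smul_mem' := by
        rintro a v ⟨c, hc⟩
        exact ⟨a * c, by simpa [real_inner_smul_right] using hc.const_mul a⟩ } with hSdef
  have hSclosed : IsClosed (S : Set H) := by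
    rw [← isSeqClosed_iff_isClosed]
    intro u v hu huv
    -- show the sequence for v is Cauchy
    have hcau : CauchySeq (fun i => ⟪x (φ i), v⟫) := by
      rw [Metric.cauchySeq_iff]
      intro ε hε
      obtain ⟨n, hn⟩ : ∃ n, ‖v - u n‖ < ε / (3 * (C + 1)) := by
        have := (tendsto_iff_norm_sub_tendsto_zero.1 huv)
        have := (this.eventually (gt_mem_nhds (by positivity : (0:ℝ) < ε / (3 * (C + 1))))).exists
        obtain ⟨n, hn⟩ := this
        exact ⟨n, by simpa [norm_sub_rev] using hn⟩
      obtain ⟨c, hc⟩ := hu n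
      have hcau' : CauchySeq (fun i => ⟪x (φ i), u n⟫) := hc.cauchySeq
      rw [Metric.cauchySeq_iff] at hcau'
      obtain ⟨N, hN⟩ := hcau' (ε / 3) (by positivity)
      refine ⟨N, fun m hm n' hn' => ?_⟩
      have key : ∀ i, |⟪x (φ i), v⟫ - ⟪x (φ i), u n⟫| ≤ (C+1) * ‖v - u n‖ := by
        intro i
        rw [← inner_sub_right]
        refine (abs_real_inner_le_norm _ _).trans ?_
        exact mul_le_mul_of_nonneg_right (by linarith [hC (φ i)]) (norm_nonneg _)
      have h1 := key m
      have h2 := key n'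
      have h3 := hN m hm n' hn'
      have h4 : (C + 1) * ‖v - u n‖ < ε / 3 := by
        have hc1 : (0:ℝ) < C + 1 := by linarith
        calc (C + 1) * ‖v - u n‖ < (C + 1) * (ε / (3 * (C + 1))) :=
              mul_lt_mul_of_pos_left hn hc1
          _ = ε / 3 := by field_simp
      simp only [Real.dist_eq] at h3 ⊢
      calc |⟪x (φ m), v⟫ - ⟪x (φ n'), v⟫|
          ≤ |⟪x (φ m), v⟫ - ⟪x (φ m), u n⟫| + |⟪x (φ m), u n⟫ - ⟪x (φ n'), u n⟫|
            + |⟪x (φ n'), u n⟫ - ⟪x (φ n'), v⟫| := by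
              have := abs_sub_le (⟪x (φ m), v⟫) (⟪x (φ m), u n⟫) (⟪x (φ n'), v⟫)
              have := abs_sub_le (⟪x (φ m), u n⟫) (⟪x (φ n'), u n⟫) (⟪x (φ n'), v⟫)
              linarith
        _ < ε := by
              have h2' : |⟪x (φ n'), u n⟫ - ⟪x (φ n'), v⟫| ≤ (C + 1) * ‖v - u n‖ := by
                rw [abs_sub_comm]; exact h2
              linarith
    exact cauchySeq_tendsto_of_complete hcau
  -- S contains the closure of the span of the range of x
  have hxS : ∀ j, x j ∈ S := fun j => ⟨f j, hconv j⟩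
  set M := (Submodule.span ℝ (Set.range x)).topologicalClosure with hM
  have hMS : M ≤ S :=
    Submodule.topologicalClosure_minimal _
      (Submodule.span_le.2 (by rintro - ⟨j, rfl⟩; exact hxS j)) hSclosed
  have hMperpS : Mᗮ ≤ S := by
    intro v hv
    refine ⟨0, ?_⟩
    have : ∀ i, ⟪x (φ i), v⟫ = 0 := fun i =>
      hv _ ((Submodule.le_topologicalClosure _) (Submodule.subset_span ⟨φ i, rfl⟩))
    simpa [this] using tendsto_const_nhds (α := ℝ) (f := atTop (α := ℕ))
  have hS : ∀ v : H, v ∈ S := by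
    intro v
    haveI : CompleteSpace M := (Submodule.isClosed_topologicalClosure _).completeSpace_coe
    have hdecomp : (↑(M.orthogonalProjection v) : H) + (v - ↑(M.orthogonalProjection v)) = v := by abel
    rw [← hdecomp]
    exact S.add_mem (hMS (M.orthogonalProjection v).2)
      (hMperpS (Submodule.sub_starProjection_mem_orthogonal (K := M) v))
  choose L hL using fun v => hS v
  have hLadd : ∀ a b, L (a + b) = L a + L b := by
    intro a b
    refine tendsto_nhds_unique (hL (a + b)) ?_
    simpa [inner_add_right] using (hL a).add (hL b)
  have hLsmul : ∀ (r : ℝ) a, L (r • a) = r * L a := by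
    intro r a
    refine tendsto_nhds_unique (hL (r • a)) ?_
    simpa [real_inner_smul_right] using (hL a).const_mul r
  have hLbound : ∀ v, ‖L v‖ ≤ C * ‖v‖ := by
    intro v
    have h1 : ∀ i, ‖⟪x (φ i), v⟫‖ ≤ C * ‖v‖ := by
      intro i
      refine (abs_real_inner_le_norm _ _).trans ?_
      exact mul_le_mul_of_nonneg_right (hC (φ i)) (norm_nonneg _)
    exact le_of_tendsto ((hL v).norm) (Eventually.of_forall h1)
  let ℓ : H →L[ℝ] ℝ := LinearMap.mkContinuous
    { toFun := L, map_add' := hLadd, map_smul' := hLsmul } C hLbound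
  refine ⟨(InnerProductSpace.toDual ℝ H).symm ℓ, φ, hφ, fun v => ?_⟩
  have : ⟪(InnerProductSpace.toDual ℝ H).symm ℓ, v⟫ = ℓ v :=
    InnerProductSpace.toDual_symm_apply
  rw [this]
  exact hL v

section Qlem
variable {H : Type*} [NormedAddCommGroup H] [InnerProductSpace ℝ H] [CompleteSpace H]
  (Q : H →L[ℝ] H)

-- Cauchy-Schwarz for the Q-form
lemma Q_cauchy_schwarz (hQsym : ∀ x y : H, ⟪Q x, y⟫ = ⟪x, Q y⟫) (hQpos : ∀ x : H, 0 ≤ ⟪Q x, x⟫) (w d : H) : ⟪Q w, d⟫ ^ 2 ≤ ⟪Q w, w⟫ * ⟪Q d, d⟫ := by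
  have key : ∀ t : ℝ, 0 ≤ ⟪Q d, d⟫ * (t * t) + (2 * ⟪Q w, d⟫) * t + ⟪Q w, w⟫ := by
    intro t
    have h := hQpos (w + t • d)
    have hexp : ⟪Q (w + t • d), w + t • d⟫
        = ⟪Q d, d⟫ * (t * t) + (2 * ⟪Q w, d⟫) * t + ⟪Q w, w⟫ := by
      have hsymm : ⟪Q d, w⟫ = ⟪Q w, d⟫ := by
        rw [hQsym d w]; exact real_inner_comm _ _
      rw [map_add, map_smul]
      simp only [inner_add_left, inner_add_right, real_inner_smul_left,
        real_inner_smul_right, hsymm]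
      ring
    linarith [hexp ▸ h]
  have := discrim_le_zero key
  rw [discrim] at this
  nlinarith
-- norm bound via the Q-form
lemma Q_norm_sq_le (hQsym : ∀ x y : H, ⟪Q x, y⟫ = ⟪x, Q y⟫) (hQpos : ∀ x : H, 0 ≤ ⟪Q x, x⟫) (w : H) : ‖Q w‖ ^ 2 ≤ ‖Q‖ * ⟪Q w, w⟫ := by
  have h1 := Q_cauchy_schwarz Q hQsym hQpos w (Q w)
  have h2 : ⟪Q (Q w), Q w⟫ ≤ ‖Q‖ * ‖Q w‖ ^ 2 := by
    have := real_inner_le_norm (Q (Q w)) (Q w)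
    have hQQw : ‖Q (Q w)‖ ≤ ‖Q‖ * ‖Q w‖ := Q.le_opNorm _
    nlinarith [norm_nonneg (Q w), norm_nonneg (Q (Q w))]
  have h3 : ⟪Q w, Q w⟫ = ‖Q w‖ ^ 2 := real_inner_self_eq_norm_sq _
  rw [h3] at h1
  rcases eq_or_lt_of_le (norm_nonneg (Q w)) with h0 | h0
  · rw [← h0]
    simpa using mul_nonneg (norm_nonneg Q) (hQpos w)
  · have hQpos' := hQpos w
    nlinarith [mul_le_mul_of_nonneg_left h2 hQpos', mul_pos h0 h0]
end Qlem

section Ran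
variable {H : Type*} [NormedAddCommGroup H] [InnerProductSpace ℝ H] [CompleteSpace H]

lemma Q_range_inner_sq_le (Q : H →L[ℝ] H)
    (hQsym : ∀ x y : H, ⟪Q x, y⟫ = ⟪x, Q y⟫) (hQpos : ∀ x : H, 0 ≤ ⟪Q x, x⟫)
    (ν : ℝ) (hν : 0 < ν) (hνQ : ∀ w ∈ (LinearMap.ker (Q : H →ₗ[ℝ] H))ᗮ, ν * ‖w‖ ≤ ‖Q w‖)
    (u : H) (hu : u ∈ Set.range Q) (d : H) :
    ⟪u, d⟫ ^ 2 ≤ ‖u‖ ^ 2 / ν * ⟪Q d, d⟫ := by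
  obtain ⟨w, rfl⟩ := hu
  set K : Submodule ℝ H := LinearMap.ker (Q : H →ₗ[ℝ] H) with hK
  haveI : CompleteSpace K := (ContinuousLinearMap.isClosed_ker Q).completeSpace_coe
  set w' : H := w - ↑(K.orthogonalProjection w) with hw'
  have hw'perp : w' ∈ Kᗮ := Submodule.sub_starProjection_mem_orthogonal (K := K) w
  have hQw' : Q w' = Q w := by
    have hker : Q ↑(K.orthogonalProjection w) = 0 := (K.orthogonalProjection w).2
    rw [hw', map_sub, hker, sub_zero]
  have h1 : ⟪Q w, d⟫ ^ 2 ≤ ⟪Q w', w'⟫ * ⟪Q d, d⟫ := by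
    rw [← hQw']
    exact Q_cauchy_schwarz Q hQsym hQpos w' d
  have h2 : ⟪Q w', w'⟫ ≤ ‖Q w‖ ^ 2 / ν := by
    have hcs : ⟪Q w', w'⟫ ≤ ‖Q w'‖ * ‖w'‖ := real_inner_le_norm _ _
    have hb := hνQ w' hw'perp
    have hnorm : ‖Q w'‖ = ‖Q w‖ := by rw [hQw']
    rw [hnorm] at hcs hb
    have : ‖w'‖ ≤ ‖Q w‖ / ν := by
      rw [le_div_iff₀ hν]; linarith
    calc ⟪Q w', w'⟫ ≤ ‖Q w‖ * (‖Q w‖ / ν) :=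
          hcs.trans (mul_le_mul_of_nonneg_left this (norm_nonneg _))
      _ = ‖Q w‖ ^ 2 / ν := by ring
  have h3 : 0 ≤ ⟪Q d, d⟫ := hQpos d
  calc ⟪Q w, d⟫ ^ 2 ≤ ⟪Q w', w'⟫ * ⟪Q d, d⟫ := h1
    _ ≤ ‖Q w‖ ^ 2 / ν * ⟪Q d, d⟫ := mul_le_mul_of_nonneg_right h2 h3
end Ran

/-- Theorem 3.2(iv): weak convergence of the G-FBS iterates in `ran Q`. -/
theorem stmt_12
    {H : Type*} [NormedAddCommGroup H] [InnerProductSpace ℝ H] [CompleteSpace H]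
    (Q : H →L[ℝ] H)
    (hQsym : ∀ x y : H, ⟪Q x, y⟫ = ⟪x, Q y⟫)
    (hQpos : ∀ x : H, 0 ≤ ⟪Q x, x⟫)
    (ν : ℝ) (hν : 0 < ν)
    (hνQ : ∀ w ∈ (LinearMap.ker (Q : H →ₗ[ℝ] H))ᗮ, ν * ‖w‖ ≤ ‖Q w‖)
    (β : ℝ) (hβ : 0 ≤ β)
    (hνβ : β < 2 * ν)
    (B : H → H)
    (hB : ∀ x y : H, ‖B x - B y‖ ^ 2 ≤ β * ⟪B x - B y, x - y⟫)
    (hranB : Set.range B ⊆ Set.range Q)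
    (A : H → Set H)
    (hA : ∀ x y u v : H, u ∈ A x → v ∈ A y → 0 ≤ ⟪u - v, x - y⟫)
    (hdemi : ∀ (y u : ℕ → H) (ylim ulim : H),
      (∀ k : ℕ, u k - B (y k) ∈ A (y k)) →
      (∀ v : H, Filter.Tendsto (fun k : ℕ => ⟪y k, v⟫) Filter.atTop (nhds ⟪ylim, v⟫)) →
      Filter.Tendsto u Filter.atTop (nhds ulim) →
      ulim - B ylim ∈ A ylim)
    (x : ℕ → H)
    (hbdd : Bornology.IsBounded (Set.range x))
    (hiter : ∀ k : ℕ, Q (x k) - B (x k) - Q (x (k + 1)) ∈ A (x (k + 1)))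
    (xs : H) (hxs : -B xs ∈ A xs) :
    ∃ z : H, -B z ∈ A z ∧
      ∀ v : H, Filter.Tendsto (fun k : ℕ => ⟪Q (x k), v⟫) Filter.atTop (nhds ⟪Q z, v⟫) := by
  -- the symmetric Q-form of the other argument
  have hsym' : ∀ a b : H, ⟪Q a, b⟫ = ⟪Q b, a⟫ := fun a b => by
    rw [hQsym a b, real_inner_comm]
  -- monotonicity consequence of the iteration
  have hmono0 : ∀ xb : H, -B xb ∈ A xb → ∀ k : ℕ,
      ⟪B (x k) - B xb, x (k+1) - xb⟫ ≤ ⟪Q (x k - x (k+1)), x (k+1) - xb⟫ := by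
    intro xb hfix k
    have h := hA _ _ _ _ (hiter k) hfix
    have hre : Q (x k) - B (x k) - Q (x (k+1)) - -B xb
        = Q (x k - x (k+1)) - (B (x k) - B xb) := by
      rw [map_sub]; abel
    rw [hre, inner_sub_left] at h
    linarith
  -- the quadratic identity
  have hid : ∀ (xb : H) (k : ℕ),
      ⟪Q (x k - xb), x k - xb⟫ - ⟪Q (x (k+1) - xb), x (k+1) - xb⟫
        = ⟪Q (x k - x (k+1)), x k - x (k+1)⟫
          + 2 * ⟪Q (x k - x (k+1)), x (k+1) - xb⟫ := by
    intro xb k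
    have hab : x k - xb = (x k - x (k+1)) + (x (k+1) - xb) := by abel
    rw [hab, map_add, inner_add_left, inner_add_right, inner_add_right,
      hsym' (x (k+1) - xb) (x k - x (k+1))]
    ring
  -- the key descent inequality
  obtain ⟨c1, c2, hc1, hc2, hkey⟩ :
      ∃ c1 c2 : ℝ, 0 < c1 ∧ 0 < c2 ∧ ∀ xb : H, -B xb ∈ A xb → ∀ k : ℕ,
        c1 * ⟪Q (x k - x (k+1)), x k - x (k+1)⟫ + c2 * ‖B (x k) - B xb‖^2
          ≤ ⟪Q (x k - xb), x k - xb⟫ - ⟪Q (x (k+1) - xb), x (k+1) - xb⟫ := by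
    rcases eq_or_lt_of_le hβ with hβ0 | hβpos
    · -- β = 0 : B is constant
      refine ⟨1, 1, one_pos, one_pos, fun xb hfix k => ?_⟩
      have hw0 : B (x k) - B xb = 0 := by
        have h := hB (x k) xb
        rw [← hβ0, zero_mul] at h
        have := sq_nonneg ‖B (x k) - B xb‖
        have hn : ‖B (x k) - B xb‖ ^ 2 = 0 := le_antisymm h this
        have : ‖B (x k) - B xb‖ = 0 := by nlinarith [norm_nonneg (B (x k) - B xb)]
        exact norm_eq_zero.1 this
      have hm := hmono0 xb hfix k
      rw [hw0] at hm ⊢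
      simp only [inner_zero_left] at hm
      rw [hid xb k]
      simp only [norm_zero]
      nlinarith
    · -- β > 0
      obtain ⟨t, ht0, htν, htβ⟩ : ∃ t : ℝ, 0 < t ∧ t < ν ∧ β < 2*t :=
        ⟨(β + 2*ν)/4, by positivity, by linarith, by linarith⟩
      refine ⟨1 - t/ν, 2/β - 1/t, ?_, ?_, ?_⟩
      · have : t/ν < 1 := (div_lt_one hν).2 htν
        linarith
      · have : 1/t < 2/β := by
          rw [div_lt_div_iff₀ ht0 hβpos]; linarith
        linarith
      intro xb hfix k
      have hwran : B (x k) - B xb ∈ Set.range Q := by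
        obtain ⟨p, hp⟩ := hranB ⟨x k, rfl⟩
        obtain ⟨q, hq⟩ := hranB ⟨xb, rfl⟩
        exact ⟨p - q, by rw [map_sub, hp, hq]⟩
      have hM3 : ⟪B (x k) - B xb, x k - x (k+1)⟫ ^ 2
          ≤ ‖B (x k) - B xb‖^2/ν * ⟪Q (x k - x (k+1)), x k - x (k+1)⟫ :=
        Q_range_inner_sq_le Q hQsym hQpos ν hν hνQ _ hwran _
      have hqa : 0 ≤ ⟪Q (x k - x (k+1)), x k - x (k+1)⟫ := hQpos _
      have hiecs : ⟪B (x k) - B xb, x k - x (k+1)⟫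
          ≤ ‖B (x k) - B xb‖^2/(2*t) + t/(2*ν) * ⟪Q (x k - x (k+1)), x k - x (k+1)⟫ := by
        have hA' : 0 ≤ ‖B (x k) - B xb‖^2/(2*t) := by positivity
        have hB' : 0 ≤ t/(2*ν) * ⟪Q (x k - x (k+1)), x k - x (k+1)⟫ := by positivity
        have hprod : (‖B (x k) - B xb‖^2/(2*t)) * (t/(2*ν) * ⟪Q (x k - x (k+1)), x k - x (k+1)⟫)
            = ‖B (x k) - B xb‖^2/ν * ⟪Q (x k - x (k+1)), x k - x (k+1)⟫ / 4 := by
          field_simp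
          ring
        have hsq2 : ⟪B (x k) - B xb, x k - x (k+1)⟫ ^ 2
            ≤ (‖B (x k) - B xb‖^2/(2*t) + t/(2*ν) * ⟪Q (x k - x (k+1)), x k - x (k+1)⟫) ^ 2 := by
          nlinarith [sq_nonneg (‖B (x k) - B xb‖^2/(2*t)
            - t/(2*ν) * ⟪Q (x k - x (k+1)), x k - x (k+1)⟫)]
        nlinarith [hsq2, hA', hB']
      have hco' : ‖B (x k) - B xb‖^2/β
          ≤ ⟪B (x k) - B xb, x (k+1) - xb⟫ + ⟪B (x k) - B xb, x k - x (k+1)⟫ := by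
        have h := hB (x k) xb
        have hab : x k - xb = (x k - x (k+1)) + (x (k+1) - xb) := by abel
        rw [hab, inner_add_right] at h
        rw [div_le_iff₀ hβpos]
        linarith
      have hm : ⟪B (x k) - B xb, x (k+1) - xb⟫
          ≤ ⟪Q (x k - x (k+1)), x (k+1) - xb⟫ := hmono0 xb hfix k
      rw [hid xb k]
      have e1 : (2/β - 1/t) * ‖B (x k) - B xb‖^2
          = 2*(‖B (x k) - B xb‖^2/β) - ‖B (x k) - B xb‖^2/t := by ring
      have e2 : (1 - t/ν) * ⟪Q (x k - x (k+1)), x k - x (k+1)⟫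
          = ⟪Q (x k - x (k+1)), x k - x (k+1)⟫
            - t/ν * ⟪Q (x k - x (k+1)), x k - x (k+1)⟫ := by ring
      have e3 : ‖B (x k) - B xb‖^2/(2*t) = (1/2) * (‖B (x k) - B xb‖^2/t) := by
        field_simp
      have e4 : t/(2*ν) * ⟪Q (x k - x (k+1)), x k - x (k+1)⟫
          = (1/2) * (t/ν * ⟪Q (x k - x (k+1)), x k - x (k+1)⟫) := by
        field_simp
      linarith [hiecs, hco', hm, e1, e2, e3, e4]
  -- nonnegativity of the Lyapunov function and its convergence
  have hVanti : ∀ xb : H, -B xb ∈ A xb →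
      Antitone (fun k => ⟪Q (x k - xb), x k - xb⟫) := by
    intro xb hfix
    refine antitone_nat_of_succ_le fun k => ?_
    have h := hkey xb hfix k
    nlinarith [hQpos (x k - x (k+1)), sq_nonneg ‖B (x k) - B xb‖,
      mul_nonneg hc1.le (hQpos (x k - x (k+1))),
      mul_nonneg hc2.le (sq_nonneg ‖B (x k) - B xb‖)]
  have hVconv : ∀ xb : H, -B xb ∈ A xb →
      ∃ ℓ : ℝ, Tendsto (fun k => ⟪Q (x k - xb), x k - xb⟫) atTop (nhds ℓ) := by
    intro xb hfix
    exact ⟨_, tendsto_atTop_ciInf (hVanti xb hfix)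
      ⟨0, by rintro - ⟨k, rfl⟩; exact hQpos _⟩⟩
  have hVdiff : ∀ xb : H, -B xb ∈ A xb →
      Tendsto (fun k => ⟪Q (x k - xb), x k - xb⟫ - ⟪Q (x (k+1) - xb), x (k+1) - xb⟫)
        atTop (nhds 0) := by
    intro xb hfix
    obtain ⟨ℓ, hℓ⟩ := hVconv xb hfix
    have h2 : Tendsto (fun k => ⟪Q (x (k+1) - xb), x (k+1) - xb⟫) atTop (nhds ℓ) :=
      hℓ.comp (tendsto_add_atTop_nat 1)
    simpa using hℓ.sub h2
  -- convergence of the residuals (using the fixed point xs)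
  have hsum0 : Tendsto (fun k => c1 * ⟪Q (x k - x (k+1)), x k - x (k+1)⟫
      + c2 * ‖B (x k) - B xs‖^2) atTop (nhds 0) := by
    refine squeeze_zero (fun k => ?_) (fun k => hkey xs hxs k) (hVdiff xs hxs)
    have := mul_nonneg hc1.le (hQpos (x k - x (k+1)))
    have := mul_nonneg hc2.le (sq_nonneg ‖B (x k) - B xs‖)
    linarith
  have hqd0 : Tendsto (fun k => ⟪Q (x k - x (k+1)), x k - x (k+1)⟫) atTop (nhds 0) := by
    have h1 : Tendsto (fun k => c1 * ⟪Q (x k - x (k+1)), x k - x (k+1)⟫) atTop (nhds 0) := by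
      refine squeeze_zero (fun k => mul_nonneg hc1.le (hQpos _)) (fun k => ?_) hsum0
      have := mul_nonneg hc2.le (sq_nonneg ‖B (x k) - B xs‖)
      linarith
    have h2 := h1.const_mul (1/c1)
    rw [mul_zero] at h2
    refine h2.congr fun k => ?_
    field_simp
  have hwsq0 : Tendsto (fun k => ‖B (x k) - B xs‖^2) atTop (nhds 0) := by
    have h1 : Tendsto (fun k => c2 * ‖B (x k) - B xs‖^2) atTop (nhds 0) := by
      refine squeeze_zero (fun k => mul_nonneg hc2.le (sq_nonneg _)) (fun k => ?_) hsum0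
      have := mul_nonneg hc1.le (hQpos (x k - x (k+1)))
      linarith
    have h2 := h1.const_mul (1/c2)
    rw [mul_zero] at h2
    refine h2.congr fun k => ?_
    field_simp
  have hw0 : Tendsto (fun k => B (x k) - B xs) atTop (nhds 0) := by
    rw [tendsto_zero_iff_norm_tendsto_zero]
    have := hwsq0.sqrt
    rw [Real.sqrt_zero] at this
    refine this.congr fun k => ?_
    rw [Real.sqrt_sq (norm_nonneg _)]
  have hBx : Tendsto (fun k => B (x k)) atTop (nhds (B xs)) := by
    have := hw0.add_const (B xs)
    rw [zero_add] at this
    refine this.congr fun k => ?_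
    abel
  have hQd0 : Tendsto (fun k => Q (x k) - Q (x (k+1))) atTop (nhds 0) := by
    rw [tendsto_zero_iff_norm_tendsto_zero]
    have hsq : Tendsto (fun k => ‖Q (x k - x (k+1))‖^2) atTop (nhds 0) := by
      refine squeeze_zero (fun k => sq_nonneg _) (fun k => Q_norm_sq_le Q hQsym hQpos _) ?_
      have := hqd0.const_mul ‖Q‖
      rwa [mul_zero] at this
    have := hsq.sqrt
    rw [Real.sqrt_zero] at this
    refine this.congr fun k => ?_
    rw [Real.sqrt_sq (norm_nonneg _), map_sub]
  have hBd : Tendsto (fun k => B (x k) - B (x (k+1))) atTop (nhds 0) := by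
    have h2 : Tendsto (fun k => B (x (k+1))) atTop (nhds (B xs)) :=
      hBx.comp (tendsto_add_atTop_nat 1)
    simpa using hBx.sub h2
  have hv0 : Tendsto (fun k => Q (x k) - B (x k) - Q (x (k+1)) + B (x (k+1))) atTop (nhds 0) := by
    have h := hQd0.sub hBd
    rw [sub_zero] at h
    refine h.congr fun k => ?_
    abel
  -- uniform bound
  obtain ⟨C, hC⟩ := isBounded_iff_forall_norm_le.1 hbdd
  have hCk : ∀ k : ℕ, ‖x k‖ ≤ C := fun k => hC _ ⟨k, rfl⟩
  -- every subsequence has a weakly convergent subsubsequence whose limit is a zero of A + B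
  have hclus : ∀ ns : ℕ → ℕ, Tendsto ns atTop atTop →
      ∃ z' : H, (-B z' ∈ A z') ∧ ∃ ms : ℕ → ℕ, StrictMono ms ∧
        ∀ v : H, Tendsto (fun i => ⟪x (ns (ms i) + 1), v⟫) atTop (nhds ⟪z', v⟫) := by
    intro ns hns
    obtain ⟨z', ms, hms, hzconv⟩ :=
      seq_weak_compact (fun k => x (ns k + 1)) C (fun k => hCk _)
    refine ⟨z', ?_, ms, hms, hzconv⟩
    have hfix := hdemi (fun i => x (ns (ms i) + 1))
      (fun i => Q (x (ns (ms i))) - B (x (ns (ms i))) - Q (x (ns (ms i) + 1))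
        + B (x (ns (ms i) + 1))) z' 0
      (fun i => by
        have := hiter (ns (ms i))
        have he : (Q (x (ns (ms i))) - B (x (ns (ms i))) - Q (x (ns (ms i) + 1))
            + B (x (ns (ms i) + 1))) - B (x (ns (ms i) + 1))
            = Q (x (ns (ms i))) - B (x (ns (ms i))) - Q (x (ns (ms i) + 1)) := by abel
        rw [he]
        exact this)
      hzconv
      (by
        have hcomp : Tendsto (fun i => ns (ms i)) atTop atTop :=
          hns.comp hms.tendsto_atTop
        exact hv0.comp hcomp)
    rwa [zero_sub] at hfix
  -- Opial-type uniqueness of the weak limit in ran Q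
  have hQeq : ∀ z₁ z₂ : H, -B z₁ ∈ A z₁ → -B z₂ ∈ A z₂ →
      (∃ m : ℕ → ℕ, Tendsto m atTop atTop ∧
        ∀ v : H, Tendsto (fun i => ⟪x (m i), v⟫) atTop (nhds ⟪z₁, v⟫)) →
      (∃ m : ℕ → ℕ, Tendsto m atTop atTop ∧
        ∀ v : H, Tendsto (fun i => ⟪x (m i), v⟫) atTop (nhds ⟪z₂, v⟫)) →
      Q z₁ = Q z₂ := by
    rintro z₁ z₂ h₁ h₂ ⟨m₁, hm₁, hw₁⟩ ⟨m₂, hm₂, hw₂⟩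
    obtain ⟨ℓ₁, hV₁⟩ := hVconv z₁ h₁
    obtain ⟨ℓ₂, hV₂⟩ := hVconv z₂ h₂
    have hid2 : ∀ k : ℕ, ⟪Q (x k - z₁), x k - z₁⟫ - ⟪Q (x k - z₂), x k - z₂⟫
        = -2 * ⟪x k, Q z₁ - Q z₂⟫ + (⟪Q z₁, z₁⟫ - ⟪Q z₂, z₂⟫) := by
      intro k
      have s1 : ⟪Q z₁, x k⟫ = ⟪x k, Q z₁⟫ := real_inner_comm _ _
      have s2 : ⟪Q z₂, x k⟫ = ⟪x k, Q z₂⟫ := real_inner_comm _ _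
      have s3 : ⟪Q (x k), z₁⟫ = ⟪x k, Q z₁⟫ := hQsym _ _
      have s4 : ⟪Q (x k), z₂⟫ = ⟪x k, Q z₂⟫ := hQsym _ _
      simp only [map_sub, inner_sub_left, inner_sub_right]
      rw [s1, s2, s3, s4]
      ring
    have hdiff : Tendsto (fun k => ⟪Q (x k - z₁), x k - z₁⟫ - ⟪Q (x k - z₂), x k - z₂⟫)
        atTop (nhds (ℓ₁ - ℓ₂)) := hV₁.sub hV₂
    have hlim : ∀ (m : ℕ → ℕ) (zz : H), Tendsto m atTop atTop →
        (∀ v : H, Tendsto (fun i => ⟪x (m i), v⟫) atTop (nhds ⟪zz, v⟫)) →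
        ℓ₁ - ℓ₂ = -2 * ⟪zz, Q z₁ - Q z₂⟫ + (⟪Q z₁, z₁⟫ - ⟪Q z₂, z₂⟫) := by
      intro m zz hm hw
      have h1 : Tendsto (fun i => ⟪Q (x (m i) - z₁), x (m i) - z₁⟫
          - ⟪Q (x (m i) - z₂), x (m i) - z₂⟫) atTop (nhds (ℓ₁ - ℓ₂)) := hdiff.comp hm
      have h2 : Tendsto (fun i => -2 * ⟪x (m i), Q z₁ - Q z₂⟫
          + (⟪Q z₁, z₁⟫ - ⟪Q z₂, z₂⟫)) atTop
          (nhds (-2 * ⟪zz, Q z₁ - Q z₂⟫ + (⟪Q z₁, z₁⟫ - ⟪Q z₂, z₂⟫))) :=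
        ((hw (Q z₁ - Q z₂)).const_mul (-2)).add_const _
      refine tendsto_nhds_unique (h1.congr fun i => hid2 (m i)) h2
    have e1 := hlim m₁ z₁ hm₁ hw₁
    have e2 := hlim m₂ z₂ hm₂ hw₂
    have e3 : ⟪z₁ - z₂, Q z₁ - Q z₂⟫ = 0 := by
      rw [inner_sub_left]; linarith
    have e4 : ⟪Q (z₁ - z₂), z₁ - z₂⟫ = 0 := by
      rw [← e3, map_sub, real_inner_comm]
    have e5 : ‖Q (z₁ - z₂)‖^2 ≤ 0 := by
      have := Q_norm_sq_le Q hQsym hQpos (z₁ - z₂)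
      rw [e4, mul_zero] at this
      exact this
    have e6 : Q (z₁ - z₂) = 0 := by
      have := norm_eq_zero.1 (le_antisymm (by nlinarith [norm_nonneg (Q (z₁ - z₂))]) (norm_nonneg _))
      exact this
    have := e6
    rw [map_sub, sub_eq_zero] at this
    exact this
  -- the weak limit
  obtain ⟨z, hzfix, ms0, hms0, hwz⟩ := hclus id tendsto_id
  refine ⟨z, hzfix, fun v => ?_⟩
  apply Filter.tendsto_of_subseq_tendsto
  intro ns hns
  obtain ⟨z', hz'fix, ms, hms, hwz'⟩ := hclus ns hns
  refine ⟨ms, ?_⟩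
  have hQz : Q z' = Q z := by
    refine hQeq z' z hz'fix hzfix
      ⟨fun i => ns (ms i) + 1, ?_, hwz'⟩
      ⟨fun i => id (ms0 i) + 1, ?_, hwz⟩
    · exact (tendsto_add_atTop_nat 1).comp (hns.comp hms.tendsto_atTop)
    · exact (tendsto_add_atTop_nat 1).comp hms0.tendsto_atTop
  have h1 : Tendsto (fun i => ⟪Q (x (ns (ms i) + 1)), v⟫) atTop (nhds ⟪Q z', v⟫) := by
    have := hwz' (Q v)
    simpa [hQsym] using this
  have h2 : Tendsto (fun i => ⟪Q (x (ns (ms i))) - Q (x (ns (ms i) + 1)), v⟫)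
      atTop (nhds 0) := by
    have hcomp : Tendsto (fun i => Q (x (ns (ms i))) - Q (x (ns (ms i) + 1)))
        atTop (nhds 0) := hQd0.comp (hns.comp hms.tendsto_atTop)
    have := Filter.Tendsto.inner (𝕜 := ℝ) hcomp (tendsto_const_nhds (x := v))
    simpa using this
  have h3 := h1.add h2
  rw [add_zero] at h3
  have h4 : Tendsto (fun i => ⟪Q (x (ns (ms i))), v⟫) atTop (nhds ⟪Q z', v⟫) := by
    refine h3.congr fun i => ?_
    rw [inner_sub_left]; ring
  rwa [hQz] at h4
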